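/- arXiv:1206.3369 — 4 statements merged into one kernel-verified Lean document; each statement's English description precedes it below -/
import Mathlib

section
/- Let a₁,b₁,a₂,b₂ be positive reals with a₁b₂ − b₁a₂ = 1, set a₃ = a₁+a₂, b₃ = b₁+b₂, and let n > 0. The point on the curve H(u,v) = n (with H(u,v) = (b₂(u+c₁) − b₁(v+c₂))(a₁(v+c₂) − a₂(u+c₁))) where dv/du = −1 has coordinates u_tan = (a₁b₂ + b₁a₂ + 2a₁b₁)√(n/(a₃b₃)) − c₁ and v_tan = (a₁b₂ + b₁a₂ + 2a₂b₂)√(n/(a₃b₃)) − c₂. -/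
theorem tangent_point_slope_neg_one (a₁ b₁ a₂ b₂ c₁ c₂ n : ℝ)
    (ha₁ : 0 < a₁) (hb₁ : 0 < b₁) (ha₂ : 0 < a₂) (hb₂ : 0 < b₂)
    (hdet : a₁ * b₂ - b₁ * a₂ = 1) (hn : 0 < n) :
    let a₃ := a₁ + a₂
    let b₃ := b₁ + b₂
    let H : ℝ → ℝ → ℝ := fun u v =>
      (b₂ * (u + c₁) - b₁ * (v + c₂)) * (a₁ * (v + c₂) - a₂ * (u + c₁))
    let utan := (a₁ * b₂ + b₁ * a₂ + 2 * a₁ * b₁) * Real.sqrt (n / (a₃ * b₃)) - c₁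
    let vtan := (a₁ * b₂ + b₁ * a₂ + 2 * a₂ * b₂) * Real.sqrt (n / (a₃ * b₃)) - c₂
    H utan vtan = n ∧
      deriv (fun u => H u vtan) utan = deriv (fun v => H utan v) vtan := by
  intro a₃ b₃ H utan vtan
  have hab : 0 < a₃ * b₃ := by positivity
  have hs2 : Real.sqrt (n / (a₃ * b₃)) * Real.sqrt (n / (a₃ * b₃)) = n / (a₃ * b₃) :=
    Real.mul_self_sqrt (by positivity)
  constructor
  · show (b₂ * (utan + c₁) - b₁ * (vtan + c₂)) * (a₁ * (vtan + c₂) - a₂ * (utan + c₁)) = n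
    have h1 : b₂ * (utan + c₁) - b₁ * (vtan + c₂) = Real.sqrt (n / (a₃ * b₃)) * b₃ := by
      simp only [utan, vtan, a₃, b₃]
      linear_combination ((b₁ + b₂) * Real.sqrt (n / ((a₁ + a₂) * (b₁ + b₂)))) * hdet
    have h2 : a₁ * (vtan + c₂) - a₂ * (utan + c₁) = Real.sqrt (n / (a₃ * b₃)) * a₃ := by
      simp only [utan, vtan, a₃, b₃]
      linear_combination ((a₁ + a₂) * Real.sqrt (n / ((a₁ + a₂) * (b₁ + b₂)))) * hdet
    rw [h1, h2]
    have heq : Real.sqrt (n / (a₃ * b₃)) * b₃ * (Real.sqrt (n / (a₃ * b₃)) * a₃) =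
        Real.sqrt (n / (a₃ * b₃)) * Real.sqrt (n / (a₃ * b₃)) * (a₃ * b₃) := by ring
    rw [heq, hs2, div_mul_cancel₀ _ (ne_of_gt hab)]
  · have hdu : deriv (fun u => H u vtan) utan =
        b₂ * (a₁ * (vtan + c₂) - a₂ * (utan + c₁)) +
          (b₂ * (utan + c₁) - b₁ * (vtan + c₂)) * (-a₂) := by
      have hA : HasDerivAt (fun u : ℝ => b₂ * (u + c₁) - b₁ * (vtan + c₂)) b₂ utan := by
        simpa using ((hasDerivAt_id utan).add_const c₁).const_mul b₂ |>.sub_const (b₁ * (vtan + c₂))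
      have hB : HasDerivAt (fun u : ℝ => a₁ * (vtan + c₂) - a₂ * (u + c₁)) (-a₂) utan := by
        simpa using (((hasDerivAt_id utan).add_const c₁).const_mul a₂).const_sub _
      exact (hA.mul hB).deriv
    have hdv : deriv (fun v => H utan v) vtan =
        (-b₁) * (a₁ * (vtan + c₂) - a₂ * (utan + c₁)) +
          (b₂ * (utan + c₁) - b₁ * (vtan + c₂)) * a₁ := by
      have hA : HasDerivAt (fun v : ℝ => b₂ * (utan + c₁) - b₁ * (v + c₂)) (-b₁) vtan := by
        simpa using (((hasDerivAt_id vtan).add_const c₂).const_mul b₁).const_sub _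
      have hB : HasDerivAt (fun v : ℝ => a₁ * (v + c₂) - a₂ * (utan + c₁)) a₁ vtan := by
        simpa using ((hasDerivAt_id vtan).add_const c₂).const_mul a₁ |>.sub_const (a₂ * (utan + c₁))
      exact (hA.mul hB).deriv
    rw [hdu, hdv]
    simp only [utan, vtan, a₃, b₃]
    ring
end

section
/- For every positive integer n, T₃(n) = 3·Σ_{z=1}^{⌊n^{1/3}⌋} ( 2·S(⌊n/z⌋, z+1, ⌊√(n/z)⌋) − ⌊√(n/z)⌋² + ⌊n/z²⌋ ) + ⌊n^{1/3}⌋³, where S(m, x₁, x₂) = Σ_{x=x₁}^{x₂} ⌊m/x⌋. -/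
def icbrt (n : ℕ) : ℕ :=
  Finset.sup ((Finset.range (n + 1)).filter (fun m => m ^ 3 ≤ n)) id

lemma icbrt_cube_le (n : ℕ) : (icbrt n) ^ 3 ≤ n := by
  unfold icbrt
  apply Finset.sup_induction (p := fun m => m ^ 3 ≤ n)
  · simpa using Nat.zero_le n
  · intro a ha b hb
    rcases le_total a b with h | h
    · simpa [sup_of_le_right h, Nat.max_eq_right h] using hb
    · simpa [sup_of_le_left h, Nat.max_eq_left h] using ha
  · intro m hm
    simpa using (Finset.mem_filter.mp hm).2

lemma le_icbrt {n m : ℕ} : m ≤ icbrt n ↔ m ^ 3 ≤ n := by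
  constructor
  · intro h
    exact le_trans (Nat.pow_le_pow_left h 3) (icbrt_cube_le n)
  · intro h
    rcases Nat.eq_zero_or_pos m with rfl | hm
    · exact Nat.zero_le _
    · have hmn : m ≤ n := le_trans (Nat.le_self_pow (by norm_num) m) h
      exact Finset.le_sup (f := id) (Finset.mem_filter.mpr ⟨Finset.mem_range.mpr (Nat.lt_succ_of_le hmn), h⟩)

def Tset (n : ℕ) : Finset (ℕ × ℕ × ℕ) :=
  (Finset.Icc 1 n ×ˢ Finset.Icc 1 n ×ˢ Finset.Icc 1 n).filter
    (fun p => p.1 * p.2.1 * p.2.2 ≤ n)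

lemma mem_Tset {n x y z : ℕ} :
    (x, y, z) ∈ Tset n ↔ 1 ≤ x ∧ 1 ≤ y ∧ 1 ≤ z ∧ x * y * z ≤ n := by
  simp only [Tset, Finset.mem_filter, Finset.mem_product, Finset.mem_Icc]
  constructor
  · rintro ⟨⟨⟨hx1, _⟩, ⟨hy1, _⟩, hz1, _⟩, h⟩; exact ⟨hx1, hy1, hz1, h⟩
  · rintro ⟨hx, hy, hz, h⟩
    refine ⟨⟨⟨hx, ?_⟩, ⟨hy, ?_⟩, hz, ?_⟩, h⟩
    · calc x = x * 1 * 1 := by ring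
        _ ≤ x * y * z := by gcongr <;> omega
        _ ≤ n := h
    · calc y = 1 * y * 1 := by ring
        _ ≤ x * y * z := by gcongr <;> omega
        _ ≤ n := h
    · calc z = 1 * 1 * z := by ring
        _ ≤ x * y * z := by gcongr <;> omega
        _ ≤ n := h

lemma split_step {α : Type*} (s : Finset α) (p : α → Prop) [DecidablePred p] :
    s.card = (s.filter p).card + (s.filter (fun a => ¬ p a)).card :=
  (Finset.card_filter_add_card_filter_not p).symm

lemma seven_split (s : Finset (ℕ × ℕ × ℕ)) :
    s.card
      = (s.filter (fun p => p.1 < p.2.1 ∧ p.1 < p.2.2)).card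
      + (s.filter (fun p => p.2.1 < p.1 ∧ p.2.1 < p.2.2)).card
      + (s.filter (fun p => p.2.2 < p.1 ∧ p.2.2 < p.2.1)).card
      + (s.filter (fun p => p.1 = p.2.1 ∧ p.1 < p.2.2)).card
      + (s.filter (fun p => p.1 = p.2.2 ∧ p.1 < p.2.1)).card
      + (s.filter (fun p => p.2.1 = p.2.2 ∧ p.2.1 < p.1)).card
      + (s.filter (fun p => p.1 = p.2.1 ∧ p.2.1 = p.2.2)).card := by
  simp only [Finset.card_filter, ← Finset.sum_add_distrib, Finset.card_eq_sum_ones s]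
  apply Finset.sum_congr rfl
  intro p _
  split_ifs <;> omega

lemma mem_Tset_rot {n x y z : ℕ} (h : (x, y, z) ∈ Tset n) : (y, z, x) ∈ Tset n := by
  rw [mem_Tset] at h ⊢
  exact ⟨h.2.1, h.2.2.1, h.1, by rw [show y * z * x = x * y * z from by ring]; exact h.2.2.2⟩

lemma card_rot (n : ℕ) (q : ℕ × ℕ × ℕ → Prop) [DecidablePred q] :
    ((Tset n).filter q).card
      = ((Tset n).filter (fun p => q (p.2.2, p.1, p.2.1))).card := by
  refine Finset.card_bij' (fun p _ => (p.2.1, p.2.2, p.1)) (fun p _ => (p.2.2, p.1, p.2.1)) ?_ ?_ ?_ ?_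
  · rintro ⟨x, y, z⟩ hp
    rw [Finset.mem_filter] at hp ⊢
    exact ⟨mem_Tset_rot hp.1, hp.2⟩
  · rintro ⟨x, y, z⟩ hp
    rw [Finset.mem_filter] at hp ⊢
    exact ⟨mem_Tset_rot (mem_Tset_rot hp.1), hp.2⟩
  · rintro ⟨x, y, z⟩ _; rfl
  · rintro ⟨x, y, z⟩ _; rfl

def Dset (n z : ℕ) : Finset (ℕ × ℕ) :=
  (Finset.Icc (z + 1) n ×ˢ Finset.Icc (z + 1) n).filter (fun q => q.1 * q.2 * z ≤ n)

lemma A3_card (n : ℕ) :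
    ((Tset n).filter (fun p => p.2.2 < p.1 ∧ p.2.2 < p.2.1)).card
      = ∑ z ∈ Finset.Icc 1 (icbrt n), (Dset n z).card := by
  rw [Finset.card_eq_sum_card_fiberwise (f := fun p => p.2.2)
      (t := Finset.Icc 1 (icbrt n)) ?_]
  · apply Finset.sum_congr rfl
    intro z hz
    rw [Finset.mem_Icc] at hz
    refine Finset.card_bij' (fun p _ => (p.1, p.2.1)) (fun q _ => (q.1, q.2, z)) ?_ ?_ ?_ ?_
    · rintro ⟨x, y, w⟩ hp
      simp only [Finset.mem_filter, mem_Tset] at hp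
      obtain ⟨⟨⟨hx1, hy1, hw1, hprod⟩, hlt1, hlt2⟩, hwz⟩ := hp
      subst hwz
      simp only [Dset, Finset.mem_filter, Finset.mem_product, Finset.mem_Icc]
      refine ⟨⟨⟨hlt1, ?_⟩, hlt2, ?_⟩, hprod⟩
      · calc x = x * 1 * 1 := by ring
          _ ≤ x * y * w := by gcongr <;> omega
          _ ≤ n := hprod
      · calc y = 1 * y * 1 := by ring
          _ ≤ x * y * w := by gcongr <;> omega
          _ ≤ n := hprod
    · rintro ⟨x, y⟩ hq
      simp only [Dset, Finset.mem_filter, Finset.mem_product, Finset.mem_Icc] at hq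
      obtain ⟨⟨⟨hx1, hxn⟩, hy1, hyn⟩, hprod⟩ := hq
      simp only [Finset.mem_filter, mem_Tset]
      exact ⟨⟨⟨by omega, by omega, hz.1, hprod⟩, by omega, by omega⟩, trivial⟩
    · rintro ⟨x, y, w⟩ hp
      simp only [Finset.mem_filter] at hp
      have hw := hp.2
      simp [hw]
    · rintro ⟨x, y⟩ _; rfl
  · rintro ⟨x, y, z⟩ hp
    simp only [Finset.mem_coe, Finset.mem_filter, mem_Tset] at hp
    obtain ⟨⟨hx1, hy1, hz1, hprod⟩, hlt1, hlt2⟩ := hp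
    simp only at hlt1 hlt2 ⊢
    rw [Finset.mem_coe, Finset.mem_Icc]
    refine ⟨hz1, le_icbrt.mpr ?_⟩
    calc z ^ 3 = z * z * z := by ring
      _ ≤ x * y * z := by gcongr <;> omega
      _ ≤ n := hprod

lemma B1_card (n : ℕ) :
    ((Tset n).filter (fun p => p.1 = p.2.1 ∧ p.1 < p.2.2)).card
      = ∑ z ∈ Finset.Icc 1 (icbrt n), (Finset.Icc (z + 1) (n / z ^ 2)).card := by
  rw [Finset.card_eq_sum_card_fiberwise (f := fun p => p.1)
      (t := Finset.Icc 1 (icbrt n)) ?_]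
  · apply Finset.sum_congr rfl
    intro z hz
    rw [Finset.mem_Icc] at hz
    have hz1 := hz.1
    have hz0 : 0 < z ^ 2 := by positivity
    refine Finset.card_bij' (fun p _ => p.2.2) (fun y _ => (z, z, y)) ?_ ?_ ?_ ?_
    · rintro ⟨x, y, w⟩ hp
      simp only [Finset.mem_filter, mem_Tset] at hp
      obtain ⟨⟨⟨hx1, hy1, hw1, hprod⟩, heq, hlt⟩, hxz⟩ := hp
      simp only at heq hlt hxz ⊢
      subst hxz; subst heq
      rw [Finset.mem_Icc]
      refine ⟨by omega, ?_⟩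
      rw [Nat.le_div_iff_mul_le hz0]
      calc w * x ^ 2 = x * x * w := by ring
        _ ≤ n := hprod
    · intro y hy
      rw [Finset.mem_Icc] at hy
      have hprod : z * z * y ≤ n := by
        have := (Nat.le_div_iff_mul_le hz0).mp hy.2
        calc z * z * y = y * z ^ 2 := by ring
          _ ≤ n := this
      simp only [Finset.mem_filter, mem_Tset]
      exact ⟨⟨⟨hz.1, hz.1, by omega, hprod⟩, trivial, by omega⟩, trivial⟩
    · rintro ⟨x, y, w⟩ hp
      simp only [Finset.mem_filter, mem_Tset] at hp
      obtain ⟨⟨⟨hx1, hy1, hw1, hprod⟩, heq, hlt⟩, hxz⟩ := hp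
      simp only at heq hlt hxz ⊢
      simp [← hxz, ← heq]
    · intro y _; rfl
  · rintro ⟨x, y, w⟩ hp
    simp only [Finset.mem_coe, Finset.mem_filter, mem_Tset] at hp
    obtain ⟨⟨hx1, hy1, hw1, hprod⟩, heq, hlt⟩ := hp
    simp only at heq hlt ⊢
    rw [Finset.mem_coe, Finset.mem_Icc]
    refine ⟨hx1, le_icbrt.mpr ?_⟩
    calc x ^ 3 = x * x * x := by ring
      _ ≤ x * y * w := by gcongr <;> omega
      _ ≤ n := hprod

lemma B4_card (n : ℕ) :
    ((Tset n).filter (fun p => p.1 = p.2.1 ∧ p.2.1 = p.2.2)).card = icbrt n := by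
  have : ((Tset n).filter (fun p => p.1 = p.2.1 ∧ p.2.1 = p.2.2)).card
      = (Finset.Icc 1 (icbrt n)).card := by
    refine Finset.card_bij' (fun p _ => p.1) (fun m _ => (m, m, m)) ?_ ?_ ?_ ?_
    · rintro ⟨x, y, w⟩ hp
      simp only [Finset.mem_filter, mem_Tset] at hp
      obtain ⟨⟨hx1, hy1, hw1, hprod⟩, heq1, heq2⟩ := hp
      simp only at heq1 heq2 ⊢
      rw [Finset.mem_Icc]
      refine ⟨hx1, le_icbrt.mpr ?_⟩
      calc x ^ 3 = x * x * x := by ring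
        _ ≤ n := by rw [heq1, heq2] at hprod ⊢; exact hprod
    · intro m hm
      rw [Finset.mem_Icc] at hm
      have : m * m * m ≤ n := by
        have := le_icbrt.mp hm.2
        calc m * m * m = m ^ 3 := by ring
          _ ≤ n := this
      simp only [Finset.mem_filter, mem_Tset]
      exact ⟨⟨hm.1, hm.1, hm.1, this⟩, trivial, trivial⟩
    · rintro ⟨x, y, w⟩ hp
      simp only [Finset.mem_filter, mem_Tset] at hp
      obtain ⟨_, heq1, heq2⟩ := hp
      simp only at heq1 heq2 ⊢
      simp [← heq1, ← heq2]
    · intro m _; rfl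
  rw [this, Nat.card_Icc]
  omega

lemma Dset_card (n z : ℕ) (hz1 : 1 ≤ z) (hzc : z ≤ icbrt n) :
    ((Dset n z).card : ℤ)
      = 2 * ∑ x ∈ Finset.Icc (z + 1) (Nat.sqrt (n / z)), ((n / z / x : ℕ) : ℤ)
        - (Nat.sqrt (n / z) : ℤ) ^ 2 + (z : ℤ) ^ 2 := by
  set m := n / z with hm
  set s := Nat.sqrt m with hs
  have hz3 : z ^ 3 ≤ n := le_icbrt.mp hzc
  have hzzm : z * z ≤ m := by
    rw [hm, Nat.le_div_iff_mul_le hz1]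
    calc z * z * z = z ^ 3 := by ring
      _ ≤ n := hz3
  have hzs : z ≤ s := Nat.le_sqrt.mpr hzzm
  have hss : s * s ≤ m := by
    have h := Nat.sqrt_le' m
    calc s * s = m.sqrt ^ 2 := by rw [hs]; ring
      _ ≤ m := h
  have hmlt : m < (s + 1) * (s + 1) := by
    have h := Nat.lt_succ_sqrt' m
    calc m < m.sqrt.succ ^ 2 := h
      _ = (s + 1) * (s + 1) := by rw [hs, Nat.succ_eq_add_one]; ring
  have hmn : m ≤ n := Nat.div_le_self n z
  have hcond : ∀ x y : ℕ, 0 < x → (x * y * z ≤ n ↔ y ≤ m / x) := by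
    intro x y hx
    rw [Nat.le_div_iff_mul_le hx, hm, Nat.le_div_iff_mul_le hz1]
    constructor
    · intro h; calc y * x * z = x * y * z := by ring
        _ ≤ n := h
    · intro h; calc x * y * z = y * x * z := by ring
        _ ≤ n := h
  -- part 1 : q.1 ≤ s
  have hpart1 : (((Dset n z).filter (fun q => q.1 ≤ s)).card : ℤ)
      = ∑ x ∈ Finset.Icc (z + 1) s, ((m / x : ℕ) : ℤ) - (z : ℤ) * (s - z) := by
    have hcount : ((Dset n z).filter (fun q => q.1 ≤ s)).card
        = ∑ x ∈ Finset.Icc (z + 1) s, (m / x - z) := by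
      rw [Finset.card_eq_sum_card_fiberwise (f := fun q => q.1)
          (t := Finset.Icc (z + 1) s) ?_]
      · apply Finset.sum_congr rfl
        intro x hx
        rw [Finset.mem_Icc] at hx
        have hx0 : 0 < x := by omega
        have hcard : ((((Dset n z).filter (fun q => q.1 ≤ s)).filter
            (fun q => q.1 = x)).card) = (Finset.Icc (z + 1) (m / x)).card := by
          refine Finset.card_bij' (fun q _ => q.2) (fun y _ => (x, y)) ?_ ?_ ?_ ?_
          · rintro ⟨a, b⟩ hq
            simp only [Finset.mem_filter, Dset, Finset.mem_product, Finset.mem_Icc] at hq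
            obtain ⟨⟨⟨⟨⟨ha1, han⟩, hb1, hbn⟩, hprod⟩, has⟩, hax⟩ := hq
            simp only at has hax hprod ⊢
            subst hax
            rw [Finset.mem_Icc]
            exact ⟨hb1, (hcond a b (by omega)).mp hprod⟩
          · intro y hy
            rw [Finset.mem_Icc] at hy
            have hyx : x * y * z ≤ n := (hcond x y hx0).mpr hy.2
            have hymn : y ≤ n := le_trans hy.2 (le_trans (Nat.div_le_self m x) hmn)
            have hxn : x ≤ n := by
              have : x ≤ s := hx.2
              have : x ≤ m := le_trans (le_trans this (Nat.sqrt_le_self m)) le_rfl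
              omega
            simp only [Finset.mem_filter, Dset, Finset.mem_product, Finset.mem_Icc]
            exact ⟨⟨⟨⟨⟨hx.1, hxn⟩, by omega, hymn⟩, hyx⟩, hx.2⟩, trivial⟩
          · rintro ⟨a, b⟩ hq
            simp only [Finset.mem_filter] at hq
            have := hq.2
            simp [this]
          · intro y _; rfl
        rw [hcard, Nat.card_Icc]
        omega
      · rintro ⟨a, b⟩ hq
        simp only [Finset.mem_coe, Finset.mem_filter, Dset, Finset.mem_product, Finset.mem_Icc] at hq
        obtain ⟨⟨⟨⟨ha1, _⟩, _⟩, _⟩, has⟩ := hq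
        simp only at has ⊢
        rw [Finset.mem_coe, Finset.mem_Icc]
        exact ⟨ha1, has⟩
    rw [hcount, Nat.cast_sum]
    have hzmx : ∀ x ∈ Finset.Icc (z + 1) s, z ≤ m / x := by
      intro x hx
      rw [Finset.mem_Icc] at hx
      rw [Nat.le_div_iff_mul_le (by omega : 0 < x)]
      calc z * x ≤ s * s := by gcongr <;> omega
        _ ≤ m := hss
    rw [Finset.sum_congr rfl (fun x hx => (Nat.cast_sub (hzmx x hx) :
        ((m / x - z : ℕ) : ℤ) = (m / x : ℕ) - z))]
    rw [Finset.sum_sub_distrib, Finset.sum_const, Nat.card_Icc, nsmul_eq_mul]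
    have : ((s + 1 - (z + 1) : ℕ) : ℤ) = (s : ℤ) - z := by omega
    rw [this]
    ring
  -- part 2 : ¬ q.1 ≤ s
  have hpart2 : (((Dset n z).filter (fun q => ¬ q.1 ≤ s)).card : ℤ)
      = ∑ x ∈ Finset.Icc (z + 1) s, ((m / x : ℕ) : ℤ) - (s : ℤ) * (s - z) := by
    have hcount : ((Dset n z).filter (fun q => ¬ q.1 ≤ s)).card
        = ∑ y ∈ Finset.Icc (z + 1) s, (m / y - s) := by
      rw [Finset.card_eq_sum_card_fiberwise (f := fun q => q.2)
          (t := Finset.Icc (z + 1) s) ?_]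
      · apply Finset.sum_congr rfl
        intro y hy
        rw [Finset.mem_Icc] at hy
        have hy0 : 0 < y := by omega
        have hcard : ((((Dset n z).filter (fun q => ¬ q.1 ≤ s)).filter
            (fun q => q.2 = y)).card) = (Finset.Icc (s + 1) (m / y)).card := by
          refine Finset.card_bij' (fun q _ => q.1) (fun x _ => (x, y)) ?_ ?_ ?_ ?_
          · rintro ⟨a, b⟩ hq
            simp only [Finset.mem_filter, Dset, Finset.mem_product, Finset.mem_Icc] at hq
            obtain ⟨⟨⟨⟨⟨ha1, han⟩, hb1, hbn⟩, hprod⟩, has⟩, hby⟩ := hq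
            simp only at has hby hprod ⊢
            subst hby
            rw [Finset.mem_Icc]
            refine ⟨by omega, ?_⟩
            rw [Nat.le_div_iff_mul_le (by omega : 0 < b)]
            have := (hcond a b (by omega)).mp hprod
            rw [Nat.le_div_iff_mul_le (by omega : 0 < a)] at this
            calc a * b = b * a := by ring
              _ ≤ m := this
          · intro x hx
            rw [Finset.mem_Icc] at hx
            have hxym : x * y ≤ m := by
              have := hx.2
              rw [Nat.le_div_iff_mul_le hy0] at this
              exact this
            have hprod : x * y * z ≤ n := by
              apply (hcond x y (by omega)).mpr
              rw [Nat.le_div_iff_mul_le (by omega : 0 < x)]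
              calc y * x = x * y := by ring
                _ ≤ m := hxym
            have hxn : x ≤ n := le_trans (le_trans hx.2 (Nat.div_le_self m y)) hmn
            have hyn : y ≤ n := le_trans (le_trans hy.2 (Nat.sqrt_le_self m)) hmn
            simp only [Finset.mem_filter, Dset, Finset.mem_product, Finset.mem_Icc]
            exact ⟨⟨⟨⟨⟨by omega, hxn⟩, by omega, hyn⟩, hprod⟩, by omega⟩, trivial⟩
          · rintro ⟨a, b⟩ hq
            simp only [Finset.mem_filter] at hq
            have := hq.2
            simp [this]
          · intro x _; rfl
        rw [hcard, Nat.card_Icc]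
        omega
      · rintro ⟨a, b⟩ hq
        simp only [Finset.mem_coe, Finset.mem_filter, Dset, Finset.mem_product, Finset.mem_Icc] at hq
        obtain ⟨⟨⟨⟨ha1, han⟩, hb1, hbn⟩, hprod⟩, has⟩ := hq
        simp only at has ⊢
        rw [Finset.mem_coe, Finset.mem_Icc]
        refine ⟨hb1, ?_⟩
        -- b < s + 1 since (s+1) * b ≤ a * b ≤ m < (s+1) * (s+1)
        by_contra hbs
        push_neg at hbs
        have h1 : a * b ≤ m := by
          have := (hcond a b (by omega)).mp hprod
          rw [Nat.le_div_iff_mul_le (by omega : 0 < a)] at this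
          calc a * b = b * a := by ring
            _ ≤ m := this
        have h2 : (s + 1) * (s + 1) ≤ a * b := by
          apply Nat.mul_le_mul <;> omega
        linarith
    rw [hcount, Nat.cast_sum]
    have hsmy : ∀ y ∈ Finset.Icc (z + 1) s, s ≤ m / y := by
      intro y hy
      rw [Finset.mem_Icc] at hy
      rw [Nat.le_div_iff_mul_le (by omega : 0 < y)]
      calc s * y ≤ s * s := by gcongr; omega
        _ ≤ m := hss
    rw [Finset.sum_congr rfl (fun y hy => (Nat.cast_sub (hsmy y hy) :
        ((m / y - s : ℕ) : ℤ) = (m / y : ℕ) - s))]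
    rw [Finset.sum_sub_distrib, Finset.sum_const, Nat.card_Icc, nsmul_eq_mul]
    have : ((s + 1 - (z + 1) : ℕ) : ℤ) = (s : ℤ) - z := by omega
    rw [this]
    ring
  have htot := split_step (Dset n z) (fun q => q.1 ≤ s)
  have : ((Dset n z).card : ℤ)
      = (((Dset n z).filter (fun q => q.1 ≤ s)).card : ℤ)
        + (((Dset n z).filter (fun q => ¬ q.1 ≤ s)).card : ℤ) := by
    exact_mod_cast congrArg (Nat.cast : ℕ → ℤ) htot
  rw [this, hpart1, hpart2]
  ring

lemma gauss (c : ℕ) : 3 * ∑ z ∈ Finset.Icc 1 c, ((z : ℤ) ^ 2 - z) = c ^ 3 - c := by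
  induction c with
  | zero => simp
  | succ k ih =>
    rw [Finset.sum_Icc_succ_top (by omega : 1 ≤ k + 1), mul_add, ih]
    push_cast
    ring

lemma sym_c1 (n : ℕ) :
    ((Tset n).filter (fun p => p.1 < p.2.1 ∧ p.1 < p.2.2)).card
      = ((Tset n).filter (fun p => p.2.2 < p.1 ∧ p.2.2 < p.2.1)).card :=
  card_rot n (fun p => p.1 < p.2.1 ∧ p.1 < p.2.2)

lemma sym_c2 (n : ℕ) :
    ((Tset n).filter (fun p => p.2.1 < p.1 ∧ p.2.1 < p.2.2)).card
      = ((Tset n).filter (fun p => p.2.2 < p.1 ∧ p.2.2 < p.2.1)).card := by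
  have e1 : ((Tset n).filter (fun p => p.2.1 < p.1 ∧ p.2.1 < p.2.2)).card
      = ((Tset n).filter (fun p : ℕ × ℕ × ℕ => p.1 < p.2.2 ∧ p.1 < p.2.1)).card :=
    card_rot n (fun p => p.2.1 < p.1 ∧ p.2.1 < p.2.2)
  have e2 : ((Tset n).filter (fun p : ℕ × ℕ × ℕ => p.1 < p.2.2 ∧ p.1 < p.2.1)).card
      = ((Tset n).filter (fun p : ℕ × ℕ × ℕ => p.1 < p.2.1 ∧ p.1 < p.2.2)).card := by
    congr 1
    apply Finset.ext
    intro p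
    simp only [Finset.mem_filter]
    constructor <;> rintro ⟨h1, h2⟩ <;> exact ⟨h1, by omega⟩
  rw [e1, e2, sym_c1]

lemma sym_d2 (n : ℕ) :
    ((Tset n).filter (fun p => p.1 = p.2.2 ∧ p.1 < p.2.1)).card
      = ((Tset n).filter (fun p => p.1 = p.2.1 ∧ p.1 < p.2.2)).card := by
  have e1 : ((Tset n).filter (fun p => p.1 = p.2.1 ∧ p.1 < p.2.2)).card
      = ((Tset n).filter (fun p : ℕ × ℕ × ℕ => p.2.2 = p.1 ∧ p.2.2 < p.2.1)).card :=
    card_rot n (fun p => p.1 = p.2.1 ∧ p.1 < p.2.2)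
  have e2 : ((Tset n).filter (fun p : ℕ × ℕ × ℕ => p.2.2 = p.1 ∧ p.2.2 < p.2.1)).card
      = ((Tset n).filter (fun p : ℕ × ℕ × ℕ => p.1 = p.2.2 ∧ p.1 < p.2.1)).card := by
    congr 1
    apply Finset.ext
    intro p
    simp only [Finset.mem_filter]
    constructor <;> rintro ⟨h1, h2⟩ <;> exact ⟨h1, by omega⟩
  rw [e1, e2]

lemma sym_d3 (n : ℕ) :
    ((Tset n).filter (fun p => p.2.1 = p.2.2 ∧ p.2.1 < p.1)).card
      = ((Tset n).filter (fun p => p.1 = p.2.1 ∧ p.1 < p.2.2)).card := by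
  have e1 : ((Tset n).filter (fun p : ℕ × ℕ × ℕ => p.2.2 = p.1 ∧ p.2.2 < p.2.1)).card
      = ((Tset n).filter (fun p : ℕ × ℕ × ℕ => p.2.1 = p.2.2 ∧ p.2.1 < p.1)).card :=
    card_rot n (fun p => p.2.2 = p.1 ∧ p.2.2 < p.2.1)
  have e2 : ((Tset n).filter (fun p : ℕ × ℕ × ℕ => p.2.2 = p.1 ∧ p.2.2 < p.2.1)).card
      = ((Tset n).filter (fun p : ℕ × ℕ × ℕ => p.1 = p.2.2 ∧ p.1 < p.2.1)).card := by
    congr 1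
    apply Finset.ext
    intro p
    simp only [Finset.mem_filter]
    constructor <;> rintro ⟨h1, h2⟩ <;> exact ⟨h1, by omega⟩
  rw [← e1, e2, sym_d2]

theorem T3_shell_formula (n : ℕ) (hn : 0 < n) :
    ((((Finset.Icc 1 n ×ˢ Finset.Icc 1 n ×ˢ Finset.Icc 1 n).filter
        (fun p => p.1 * p.2.1 * p.2.2 ≤ n)).card : ℤ)
      = 3 * ∑ z ∈ Finset.Icc 1 (icbrt n),
          (2 * ∑ x ∈ Finset.Icc (z + 1) (Nat.sqrt (n / z)), ((n / z / x : ℕ) : ℤ)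
            - ((Nat.sqrt (n / z) : ℤ)) ^ 2 + ((n / z ^ 2 : ℕ) : ℤ))
        + (icbrt n : ℤ) ^ 3) := by
  have h7 := seven_split (Tset n)
  have hc1 := sym_c1 n
  have hc2 := sym_c2 n
  have hd2 := sym_d2 n
  have hd3 := sym_d3 n
  have hB4 := B4_card n
  have hNat : (Tset n).card
      = 3 * ((Tset n).filter (fun p => p.2.2 < p.1 ∧ p.2.2 < p.2.1)).card
        + 3 * ((Tset n).filter (fun p => p.1 = p.2.1 ∧ p.1 < p.2.2)).card
        + icbrt n := by omega
  have hZ : ((Tset n).card : ℤ)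
      = 3 * (((Tset n).filter (fun p => p.2.2 < p.1 ∧ p.2.2 < p.2.1)).card : ℤ)
        + 3 * (((Tset n).filter (fun p => p.1 = p.2.1 ∧ p.1 < p.2.2)).card : ℤ)
        + (icbrt n : ℤ) := by
    rw [hNat]; push_cast; ring
  show ((Tset n).card : ℤ) = _
  rw [hZ, A3_card n, B1_card n, Nat.cast_sum, Nat.cast_sum]
  have hD : ∀ z ∈ Finset.Icc 1 (icbrt n), ((Dset n z).card : ℤ)
      = 2 * ∑ x ∈ Finset.Icc (z + 1) (Nat.sqrt (n / z)), ((n / z / x : ℕ) : ℤ)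
        - (Nat.sqrt (n / z) : ℤ) ^ 2 + (z : ℤ) ^ 2 := by
    intro z hz
    rw [Finset.mem_Icc] at hz
    exact Dset_card n z hz.1 hz.2
  have hI : ∀ z ∈ Finset.Icc 1 (icbrt n), (((Finset.Icc (z + 1) (n / z ^ 2)).card : ℕ) : ℤ)
      = ((n / z ^ 2 : ℕ) : ℤ) - z := by
    intro z hz
    rw [Finset.mem_Icc] at hz
    have hz3 : z ^ 3 ≤ n := le_icbrt.mp hz.2
    have hle : z ≤ n / z ^ 2 := by
      rw [Nat.le_div_iff_mul_le (Nat.pow_pos hz.1)]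
      calc z * z ^ 2 = z ^ 3 := by ring
        _ ≤ n := hz3
    rw [Nat.card_Icc]
    omega
  rw [Finset.sum_congr rfl hD, Finset.sum_congr rfl hI]
  have h1 : ∑ z ∈ Finset.Icc 1 (icbrt n),
        (2 * ∑ x ∈ Finset.Icc (z + 1) (Nat.sqrt (n / z)), ((n / z / x : ℕ) : ℤ)
          - (Nat.sqrt (n / z) : ℤ) ^ 2 + ((n / z ^ 2 : ℕ) : ℤ))
      = ∑ z ∈ Finset.Icc 1 (icbrt n),
          (2 * ∑ x ∈ Finset.Icc (z + 1) (Nat.sqrt (n / z)), ((n / z / x : ℕ) : ℤ)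
            - (Nat.sqrt (n / z) : ℤ) ^ 2 + (z : ℤ) ^ 2)
        + ∑ z ∈ Finset.Icc 1 (icbrt n), (((n / z ^ 2 : ℕ) : ℤ) - z)
        - ∑ z ∈ Finset.Icc 1 (icbrt n), ((z : ℤ) ^ 2 - z) := by
    rw [← Finset.sum_add_distrib, ← Finset.sum_sub_distrib]
    exact Finset.sum_congr rfl (fun z _ => by ring)
  have h2 := gauss (icbrt n)
  rw [h1]
  linarith
end

section
/- Define β(x) = ⌊n/x⌋, ε(x) = n mod x, δ₁(x) = β(x) − β(x+1), δ₂(x) = δ₁(x) − δ₁(x+1), and γ(x) = β(x) − (x−1)δ₁(x). Then for every integer x ≥ 1, ε(x) = ε(x+1) + γ(x+1) − x·δ₂(x). -/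
theorem bresenham_error_recurrence (n : ℕ) (hn : 0 < n) (x : ℕ) (hx : 1 ≤ x) :
    let β : ℕ → ℤ := fun t => ((n / t : ℕ) : ℤ)
    let ε : ℕ → ℤ := fun t => ((n % t : ℕ) : ℤ)
    let δ₁ : ℕ → ℤ := fun t => β t - β (t + 1)
    let δ₂ : ℕ → ℤ := fun t => δ₁ t - δ₁ (t + 1)
    let γ : ℕ → ℤ := fun t => β t - ((t : ℤ) - 1) * δ₁ t
    ε x = ε (x + 1) + γ (x + 1) - (x : ℤ) * δ₂ x := by
  intro β ε δ₁ δ₂ γ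
  have h : ∀ t : ℕ, ε t = (n : ℤ) - (t : ℤ) * β t := by
    intro t
    have := Nat.mod_add_div n t
    simp only [ε, β]
    rw [eq_sub_iff_add_eq]
    exact_mod_cast this
  simp only [δ₂, δ₁, γ, h]
  push_cast
  ring
end

section
/- With β(x) = ⌊n/x⌋, δ₁(x) = β(x) − β(x+1), δ₂(x) = δ₁(x) − δ₁(x+1): for all integers x with (2n)^{1/3} < x and x+2 ≤ √n (all quantities defined), δ₂(x) ∈ {−1, 0, 1, 2}. -/
set_option maxHeartbeats 1000000 in
theorem second_difference_bounded (n : ℕ) (hn : 0 < n) (x : ℕ)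
    (hlow : 2 * n < x ^ 3) (hhigh : (x + 2) ^ 2 ≤ n) :
    let β : ℕ → ℤ := fun t => ((n / t : ℕ) : ℤ)
    let δ₁ : ℕ → ℤ := fun t => β t - β (t + 1)
    δ₁ x - δ₁ (x + 1) ∈ ({-1, 0, 1, 2} : Set ℤ) := by
  intro β δ₁
  have hx : 0 < x := by
    rcases Nat.eq_zero_or_pos x with h | h
    · subst h; simp at hlow
    · exact h
  set a := n / x with ha
  set b := n / (x + 1) with hb
  set c := n / (x + 2) with hc
  have hA : x * a ≤ n ∧ n < x * a + x := by
    have h1 : x * a + n % x = n := Nat.div_add_mod n x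
    have h2 := Nat.mod_lt n hx
    omega
  have hB : (x + 1) * b ≤ n ∧ n < (x + 1) * b + (x + 1) := by
    have h1 : (x + 1) * b + n % (x + 1) = n := Nat.div_add_mod n (x + 1)
    have h2 := Nat.mod_lt n (show 0 < x + 1 by omega)
    omega
  have hC : (x + 2) * c ≤ n ∧ n < (x + 2) * c + (x + 2) := by
    have h1 : (x + 2) * c + n % (x + 2) = n := Nat.div_add_mod n (x + 2)
    have h2 := Nat.mod_lt n (show 0 < x + 2 by omega)
    omega
  have A1 : (x : ℤ) * a ≤ n := by exact_mod_cast hA.1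
  have A2 : (n : ℤ) < x * a + x := by exact_mod_cast hA.2
  have B1 : ((x : ℤ) + 1) * b ≤ n := by exact_mod_cast hB.1
  have B2 : (n : ℤ) < ((x : ℤ) + 1) * b + ((x : ℤ) + 1) := by exact_mod_cast hB.2
  have C1 : ((x : ℤ) + 2) * c ≤ n := by exact_mod_cast hC.1
  have C2 : (n : ℤ) < ((x : ℤ) + 2) * c + ((x : ℤ) + 2) := by exact_mod_cast hC.2
  have hlow' : 2 * (n : ℤ) < (x : ℤ) ^ 3 := by exact_mod_cast hlow
  have hn' : (0 : ℤ) < n := by exact_mod_cast hn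
  have hx' : (0 : ℤ) < x := by exact_mod_cast hx
  have hP : (0 : ℤ) < (x : ℤ) * ((x : ℤ) + 1) * ((x : ℤ) + 2) := by positivity
  set d : ℤ := (a : ℤ) - 2 * b + c with hd
  have hupper : d ≤ 2 := by
    have key : (x : ℤ) * ((x : ℤ) + 1) * ((x : ℤ) + 2) * d <
        (x : ℤ) * ((x : ℤ) + 1) * ((x : ℤ) + 2) * 3 := by
      nlinarith [mul_le_mul_of_nonneg_left A1 (by positivity : (0:ℤ) ≤ ((x:ℤ)+1)*((x:ℤ)+2)),
        mul_le_mul_of_nonneg_left C1 (by positivity : (0:ℤ) ≤ (x:ℤ)*((x:ℤ)+1)),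
        mul_lt_mul_of_pos_left B2 (by positivity : (0:ℤ) < (x:ℤ)*((x:ℤ)+2))]
    have := (mul_lt_mul_iff_right₀ hP).mp key
    omega
  have hlower : -1 ≤ d := by
    have key : (x : ℤ) * ((x : ℤ) + 1) * ((x : ℤ) + 2) * (-2) <
        (x : ℤ) * ((x : ℤ) + 1) * ((x : ℤ) + 2) * d := by
      nlinarith [mul_lt_mul_of_pos_left A2 (by positivity : (0:ℤ) < ((x:ℤ)+1)*((x:ℤ)+2)),
        mul_lt_mul_of_pos_left C2 (by positivity : (0:ℤ) < (x:ℤ)*((x:ℤ)+1)),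
        mul_le_mul_of_nonneg_left B1 (by positivity : (0:ℤ) ≤ (x:ℤ)*((x:ℤ)+2))]
    have := (mul_lt_mul_iff_right₀ hP).mp key
    omega
  have hgoal : δ₁ x - δ₁ (x + 1) = d := by
    simp only [δ₁, β, hd]
    ring
  rw [hgoal]
  simp only [Set.mem_insert_iff, Set.mem_singleton_iff]
  omega
end
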